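/- Let Γ be an access structure on a finite set P in which every member has size at most r for some integer r ≥ 2, and let d = d(Γ) be the maximal degree. Then there exists a perfect secret sharing scheme realizing Γ with complexity at most d − (d−1)/r; consequently σ(Γ) ≤ d − (d−1)/r. -/

import Mathlib

open MeasureTheory Finset
open scoped ENNReal

namespace OnlineSecretSharing

noncomputable section

/-- Shannon entropy of a finitely-valued random variable `X` on the probability
space `(Ω, μ)`. -/
def H {Ω : Type*} [MeasurableSpace Ω] (μ : Measure Ω) {S : Type*} [Fintype S]
    (X : Ω → S) : ℝ :=
  ∑ s : S, Real.negMulLog (μ (X ⁻¹' {s})).toReal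

/-- `Y` is almost surely a function of `X`. -/
def DeterminedBy {Ω : Type*} [MeasurableSpace Ω] (μ : Measure Ω) {S T : Type*}
    (Y : Ω → T) (X : Ω → S) : Prop :=
  ∃ f : S → T, ∀ᵐ ω ∂μ, Y ω = f (X ω)

/-- The (finitely-valued) random variables `X` and `Y` are statistically
independent. -/
def IndepRV {Ω : Type*} [MeasurableSpace Ω] (μ : Measure Ω) {S T : Type*}
    (X : Ω → S) (Y : Ω → T) : Prop :=
  ∀ (s : S) (t : T), μ (X ⁻¹' {s} ∩ Y ⁻¹' {t}) = μ (X ⁻¹' {s}) * μ (Y ⁻¹' {t})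

/-- The joint random variable `(ξ_p)_{p ∈ A}`. -/
def joint {Ω P : Type*} {S : P → Type*} (ξ : (p : P) → Ω → S p) (A : Finset P) :
    Ω → ((p : A) → S (p : P)) :=
  fun ω p => ξ (p : P) ω

/-- An access structure: a nonempty Sperner family of nonempty subsets of the set
`P` of participants; the members of `edges` are the minimal qualified subsets. -/
structure AccessStructure (P : Type*) where
  (edges : Finset (Finset P))
  (nonempty : edges.Nonempty)
  (mem_nonempty : ∀ E ∈ edges, E.Nonempty)
  (sperner : ∀ E ∈ edges, ∀ F ∈ edges, E ⊆ F → E = F)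

/-- A set of participants is qualified if it contains a minimal qualified set. -/
def AccessStructure.Qualified {P : Type*} (Γ : AccessStructure P) (A : Finset P) : Prop :=
  ∃ E ∈ Γ.edges, E ⊆ A

/-- The degree of a participant: the number of hyperedges containing it. -/
def AccessStructure.degree {P : Type*} [DecidableEq P] (Γ : AccessStructure P)
    (p : P) : ℕ :=
  (Γ.edges.filter fun E => p ∈ E).card

/-- The maximal degree of an access structure. -/
def AccessStructure.maxDegree {P : Type*} [Fintype P] [DecidableEq P]
    (Γ : AccessStructure P) : ℕ :=
  Finset.univ.sup Γ.degree

/-- A (candidate) secret sharing scheme: finite-range random variables on a common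
probability space, one secret and one share for each participant. -/
structure Scheme (P : Type) where
  (Ω : Type)
  [ms : MeasurableSpace Ω]
  (μ : Measure Ω)
  (isProb : IsProbabilityMeasure μ)
  (Sec : Type)
  [secFin : Fintype Sec]
  (sec : Ω → Sec)
  (Sh : P → Type)
  [shFin : ∀ p, Fintype (Sh p)]
  (sh : (p : P) → Ω → Sh p)

attribute [instance] Scheme.ms Scheme.secFin Scheme.shFin

/-- A perfect secret sharing scheme realizing `Γ`: the secret has positive entropy,
qualified sets determine the secret, and the shares of unqualified sets are
independent of the secret. -/
def Scheme.Realizes {P : Type} [Fintype P] [DecidableEq P] (𝒮 : Scheme P)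
    (Γ : AccessStructure P) : Prop :=
  0 < H 𝒮.μ 𝒮.sec ∧
  (∀ A : Finset P, Γ.Qualified A → DeterminedBy 𝒮.μ 𝒮.sec (joint 𝒮.sh A)) ∧
  (∀ A : Finset P, ¬ Γ.Qualified A → IndepRV 𝒮.μ (joint 𝒮.sh A) 𝒮.sec)

/-- Complexity of a scheme: (size of the largest share) / (size of the secret). -/
def Scheme.complexity {P : Type} [Fintype P] (𝒮 : Scheme P) : ℝ≥0∞ :=
  (⨆ p : P, ENNReal.ofReal (H 𝒮.μ (𝒮.sh p))) / ENNReal.ofReal (H 𝒮.μ 𝒮.sec)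

/-- The (off-line) complexity `σ(Γ)` of an access structure. -/
def sigmaC {P : Type} [Fintype P] [DecidableEq P] (Γ : AccessStructure P) : ℝ≥0∞ :=
  ⨅ (𝒮 : Scheme P) (_ : 𝒮.Realizes Γ), 𝒮.complexity

/-- An on-line secret sharing scheme: a secret, a family `(ξ_α)_{α ∈ Idx}` of
finite-range random variables, and a dealer strategy `D` assigning an index to
every finite history; a history is a list whose `j`-th entry is the set of
(position-encoded) minimal qualified sets revealed when the `j`-th participant
arrives. -/
structure OnlineScheme (P : Type) where
  (Ω : Type)
  [ms : MeasurableSpace Ω]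
  (μ : Measure Ω)
  (isProb : IsProbabilityMeasure μ)
  (Sec : Type)
  [secFin : Fintype Sec]
  (sec : Ω → Sec)
  (Idx : Type)
  (ShT : Idx → Type)
  [shFin : ∀ α, Fintype (ShT α)]
  (ξ : (α : Idx) → Ω → ShT α)
  (D : List (Finset (Finset ℕ)) → Idx)

attribute [instance] OnlineScheme.ms OnlineScheme.secFin OnlineScheme.shFin

/-- The set of hyperedges (encoded via positions in the arrival order `π`) revealed
when the `j`-th participant arrives: those minimal qualified sets containing the
`j`-th participant all whose members arrived by time `j`. -/
def hist {P : Type} [Fintype P] [DecidableEq P] (Γ : AccessStructure P) {n : ℕ}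
    (π : Fin n ≃ P) (j : Fin n) : Finset (Finset ℕ) :=
  (Γ.edges.filter fun E => π j ∈ E ∧ ∀ p ∈ E, ∃ i : Fin n, i ≤ j ∧ π i = p).image
    fun E => E.image fun p => ((π.symm p : Fin n) : ℕ)

/-- The history seen by the dealer when the `j`-th participant arrives. -/
def histList {P : Type} [Fintype P] [DecidableEq P] (Γ : AccessStructure P) {n : ℕ}
    (π : Fin n ≃ P) (j : Fin n) : List (Finset (Finset ℕ)) :=
  ((List.finRange n).take (j.1 + 1)).map (hist Γ π)

/-- The assignment of shares produced by an on-line scheme for the arrival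
order `π`, as an (off-line) scheme. -/
def OnlineScheme.toScheme {P : Type} [Fintype P] [DecidableEq P] (𝒪 : OnlineScheme P)
    (Γ : AccessStructure P) (π : Fin (Fintype.card P) ≃ P) : Scheme P where
  Ω := 𝒪.Ω
  ms := 𝒪.ms
  μ := 𝒪.μ
  isProb := 𝒪.isProb
  Sec := 𝒪.Sec
  secFin := 𝒪.secFin
  sec := 𝒪.sec
  Sh := fun p => 𝒪.ShT (𝒪.D (histList Γ π (π.symm p)))
  shFin := fun _ => 𝒪.shFin _
  sh := fun _ => 𝒪.ξ _

/-- An on-line scheme realizes `Γ` if for every arrival order the induced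
assignment of shares is a perfect secret sharing scheme realizing `Γ`. -/
def OnlineScheme.Realizes {P : Type} [Fintype P] [DecidableEq P] (𝒪 : OnlineScheme P)
    (Γ : AccessStructure P) : Prop :=
  ∀ π : Fin (Fintype.card P) ≃ P, (𝒪.toScheme Γ π).Realizes Γ

/-- Complexity of an on-line scheme. -/
def OnlineScheme.complexity {P : Type} (𝒪 : OnlineScheme P) : ℝ≥0∞ :=
  (⨆ α : 𝒪.Idx, ENNReal.ofReal (H 𝒪.μ (𝒪.ξ α))) / ENNReal.ofReal (H 𝒪.μ 𝒪.sec)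

/-- The on-line complexity `o(Γ)` of an access structure. -/
def oC {P : Type} [Fintype P] [DecidableEq P] (Γ : AccessStructure P) : ℝ≥0∞ :=
  ⨅ (𝒪 : OnlineScheme P) (_ : 𝒪.Realizes Γ), 𝒪.complexity

/-- An entropy function for `Γ`: rules (a)–(e) of the entropy method. -/
def IsEntropyFn {P : Type} [DecidableEq P] (Γ : AccessStructure P)
    (f : Finset P → ℝ) : Prop :=
  f ∅ = 0 ∧
  (∀ A B : Finset P, A ⊆ B → f A ≤ f B) ∧
  (∀ A B : Finset P, f (A ∩ B) + f (A ∪ B) ≤ f A + f B) ∧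
  (∀ A B : Finset P, A ⊆ B → ¬ Γ.Qualified A → Γ.Qualified B → f A + 1 ≤ f B) ∧
  (∀ A B : Finset P, Γ.Qualified A → Γ.Qualified B → ¬ Γ.Qualified (A ∩ B) →
    f (A ∩ B) + f (A ∪ B) + 1 ≤ f A + f B)

/-- The access structure associated with a graph: the minimal qualified sets are
exactly the edges. -/
def graphAS {P : Type} [Fintype P] [DecidableEq P] (G : SimpleGraph P)
    (hne : ∃ a b, G.Adj a b) : AccessStructure P :=
  letI : DecidableRel G.Adj := Classical.decRel _
  { edges := ((Finset.univ : Finset (P × P)).filter fun q => G.Adj q.1 q.2).image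
      fun q => {q.1, q.2}
    nonempty := by
      obtain ⟨a, b, hab⟩ := hne
      exact ⟨{a, b}, Finset.mem_image.2
        ⟨(a, b), Finset.mem_filter.2 ⟨Finset.mem_univ _, hab⟩, rfl⟩⟩
    mem_nonempty := by
      intro E hE
      rcases Finset.mem_image.1 hE with ⟨q, _, rfl⟩
      exact ⟨q.1, by simp⟩
    sperner := by
      intro E hE F hF hEF
      rcases Finset.mem_image.1 hE with ⟨q, hq, rfl⟩
      rcases Finset.mem_image.1 hF with ⟨r, hr, rfl⟩
      have hq' : G.Adj q.1 q.2 := (Finset.mem_filter.1 hq).2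
      have hr' : G.Adj r.1 r.2 := (Finset.mem_filter.1 hr).2
      refine Finset.eq_of_subset_of_card_le hEF ?_
      rw [Finset.card_pair hr'.ne, Finset.card_pair hq'.ne] }

/-- The path `P_{m+2}` on the `m + 2` vertices `0, 1, …, m+1` (in this order),
as an access structure: the minimal qualified sets are the pairs `{i, i+1}`. -/
def pathAS (m : ℕ) : AccessStructure (Fin (m + 2)) where
  edges := (Finset.univ : Finset (Fin (m + 1))).image fun i => {i.castSucc, i.succ}
  nonempty := ⟨_, Finset.mem_image.2 ⟨0, Finset.mem_univ _, rfl⟩⟩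
  mem_nonempty := by
    intro E hE
    rcases Finset.mem_image.1 hE with ⟨i, _, rfl⟩
    exact ⟨_, Finset.mem_insert_self _ _⟩
  sperner := by
    intro E hE F hF hEF
    rcases Finset.mem_image.1 hE with ⟨i, _, rfl⟩
    rcases Finset.mem_image.1 hF with ⟨j, _, rfl⟩
    have h1 := hEF (Finset.mem_insert_self _ _)
    have h2 := hEF (Finset.mem_insert_of_mem (Finset.mem_singleton_self _))
    rw [Finset.mem_insert, Finset.mem_singleton] at h1 h2
    rw [Fin.ext_iff, Fin.ext_iff] at h1 h2
    simp only [Fin.coe_castSucc, Fin.val_succ] at h1 h2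
    have : i = j := Fin.ext (by omega)
    subst this; rfl

/-- The cycle `C_{m+3}` on the `m + 3` vertices `0, 1, …, m+2` (in this cyclic
order), as an access structure: the minimal qualified sets are the pairs
`{i, i+1}` together with `{0, m+2}`. -/
def cycleAS (m : ℕ) : AccessStructure (Fin (m + 3)) where
  edges := ((Finset.univ : Finset (Fin (m + 2))).image fun i => {i.castSucc, i.succ}) ∪
    {({0, Fin.last (m + 2)} : Finset (Fin (m + 3)))}
  nonempty := ⟨_, Finset.mem_union_right _ (Finset.mem_singleton_self _)⟩
  mem_nonempty := by
    intro E hE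
    rcases Finset.mem_union.1 hE with hE | hE
    · rcases Finset.mem_image.1 hE with ⟨i, _, rfl⟩
      exact ⟨_, Finset.mem_insert_self _ _⟩
    · rw [Finset.mem_singleton.1 hE]
      exact ⟨_, Finset.mem_insert_self _ _⟩
  sperner := by
    intro E hE F hF hEF
    rcases Finset.mem_union.1 hE with hE | hE <;>
      rcases Finset.mem_union.1 hF with hF | hF
    · rcases Finset.mem_image.1 hE with ⟨i, _, rfl⟩
      rcases Finset.mem_image.1 hF with ⟨j, _, rfl⟩
      have h1 := hEF (Finset.mem_insert_self _ _)
      have h2 := hEF (Finset.mem_insert_of_mem (Finset.mem_singleton_self _))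
      rw [Finset.mem_insert, Finset.mem_singleton] at h1 h2
      rw [Fin.ext_iff, Fin.ext_iff] at h1 h2
      simp only [Fin.coe_castSucc, Fin.val_succ] at h1 h2
      have : i = j := Fin.ext (by omega)
      subst this; rfl
    · exfalso
      rcases Finset.mem_image.1 hE with ⟨i, _, rfl⟩
      rw [Finset.mem_singleton.1 hF] at hEF
      have h1 := hEF (Finset.mem_insert_self _ _)
      have h2 := hEF (Finset.mem_insert_of_mem (Finset.mem_singleton_self _))
      rw [Finset.mem_insert, Finset.mem_singleton] at h1 h2
      rw [Fin.ext_iff, Fin.ext_iff] at h1 h2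
      simp only [Fin.coe_castSucc, Fin.val_succ, Fin.val_zero, Fin.val_last] at h1 h2
      have := i.2
      omega
    · exfalso
      rcases Finset.mem_image.1 hF with ⟨j, _, rfl⟩
      rw [Finset.mem_singleton.1 hE] at hEF
      have h1 := hEF (Finset.mem_insert_self _ _)
      have h2 := hEF (Finset.mem_insert_of_mem (Finset.mem_singleton_self _))
      rw [Finset.mem_insert, Finset.mem_singleton] at h1 h2
      rw [Fin.ext_iff, Fin.ext_iff] at h1 h2
      simp only [Fin.coe_castSucc, Fin.val_succ, Fin.val_zero, Fin.val_last] at h1 h2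
      have := j.2
      omega
    · rw [Finset.mem_singleton.1 hE, Finset.mem_singleton.1 hF]

/-- The vertex set of the graph `G(d,m)`: a center (`none`), `d` star leaves
(`some (inl i)`) and `m` isolated vertices (`some (inr j)`). -/
abbrev StarVertex (d m : ℕ) : Type := Option (Fin d ⊕ Fin m)

/-- The center of the star in the graph `G(d,m)`. -/
def starCenter (d m : ℕ) : StarVertex d m := none

/-- The graph `G(d,m)`: a star with `d` edges together with `m` isolated
vertices, as an access structure. -/
def starAS (d m : ℕ) (hd : 1 ≤ d) : AccessStructure (StarVertex d m) where
  edges := (Finset.univ : Finset (Fin d)).image fun i =>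
    {starCenter d m, some (Sum.inl i)}
  nonempty := ⟨_, Finset.mem_image.2 ⟨⟨0, by omega⟩, Finset.mem_univ _, rfl⟩⟩
  mem_nonempty := by
    intro E hE
    rcases Finset.mem_image.1 hE with ⟨i, _, rfl⟩
    exact ⟨_, Finset.mem_insert_self _ _⟩
  sperner := by
    intro E hE F hF hEF
    rcases Finset.mem_image.1 hE with ⟨i, _, rfl⟩
    rcases Finset.mem_image.1 hF with ⟨j, _, rfl⟩
    have h2 := hEF (Finset.mem_insert_of_mem (Finset.mem_singleton_self _))
    rw [Finset.mem_insert, Finset.mem_singleton] at h2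
    rcases h2 with h | h
    · exact absurd h (by simp [starCenter])
    · simp only [Option.some.injEq, Sum.inl.injEq] at h
      subst h; rfl

/-- The substructure of `Γ` induced by `S` (assuming it contains at least one
hyperedge), as an access structure on the subtype `S`. -/
def inducedAS {P : Type} [DecidableEq P] (Γ : AccessStructure P) (S : Finset P)
    (h : ∃ E ∈ Γ.edges, E ⊆ S) : AccessStructure {x : P // x ∈ S} where
  edges := (Γ.edges.filter fun E => E ⊆ S).image fun E => E.subtype fun x => x ∈ S
  nonempty := by
    obtain ⟨E, hE, hES⟩ := h
    exact ⟨_, Finset.mem_image.2 ⟨E, Finset.mem_filter.2 ⟨hE, hES⟩, rfl⟩⟩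
  mem_nonempty := by
    intro E' hE'
    rcases Finset.mem_image.1 hE' with ⟨E, hE, rfl⟩
    have hE1 := (Finset.mem_filter.1 hE).1
    have hES := (Finset.mem_filter.1 hE).2
    obtain ⟨a, ha⟩ := Γ.mem_nonempty E hE1
    exact ⟨⟨a, hES ha⟩, Finset.mem_subtype.2 ha⟩
  sperner := by
    intro E' hE' F' hF' hEF
    rcases Finset.mem_image.1 hE' with ⟨E, hE, rfl⟩
    rcases Finset.mem_image.1 hF' with ⟨F, hF, rfl⟩
    have hE1 := (Finset.mem_filter.1 hE).1
    have hF1 := (Finset.mem_filter.1 hF).1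
    have hES := (Finset.mem_filter.1 hE).2
    have hsub : E ⊆ F := by
      intro a ha
      exact Finset.mem_subtype.1 (hEF (Finset.mem_subtype.2 ha : (⟨a, hES ha⟩ :
        {x : P // x ∈ S}) ∈ E.subtype fun x => x ∈ S))
    rw [Γ.sperner E hE1 F hF1 hsub]

namespace St4


def μu (Ω : Type) [Fintype Ω] [MeasurableSpace Ω] : Measure Ω :=
  (Fintype.card Ω : ℝ≥0∞)⁻¹ • Measure.count

variable {Ω : Type} [Fintype Ω] [MeasurableSpace Ω] [MeasurableSingletonClass Ω]

lemma μu_apply (S : Set Ω) :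
    μu Ω S = (Nat.card S : ℝ≥0∞) / (Fintype.card Ω : ℝ≥0∞) := by
  have hfin : S.Finite := S.toFinite
  have hc : (Nat.card S : ℕ) = hfin.toFinset.card := by
    rw [Nat.card_coe_set_eq, Set.ncard_eq_toFinset_card S hfin]
  rw [μu, Measure.smul_apply, Measure.count_apply_finite S hfin, hc, smul_eq_mul, mul_comm,
    div_eq_mul_inv]

lemma μu_univ [Nonempty Ω] : μu Ω Set.univ = 1 := by
  rw [μu_apply]
  rw [Nat.card_coe_set_eq, Set.ncard_univ, Nat.card_eq_fintype_card]
  exact ENNReal.div_self (by exact_mod_cast Fintype.card_ne_zero) (by simp)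

lemma μu_prob [Nonempty Ω] : IsProbabilityMeasure (μu Ω) := ⟨μu_univ⟩

lemma μu_toReal (S : Set Ω) :
    (μu Ω S).toReal = (Nat.card S : ℝ) / (Fintype.card Ω : ℝ) := by
  rw [μu_apply, ENNReal.toReal_div]; simp

lemma sum_negMulLog_le {T : Type} [Fintype T] [Nonempty T] (p : T → ℝ)
    (h0 : ∀ t, 0 ≤ p t) (h1 : ∑ t, p t = 1) :
    ∑ t, Real.negMulLog (p t) ≤ Real.log (Fintype.card T) := by
  set n : ℝ := (Fintype.card T : ℝ) with hn
  have hnpos : 0 < n := by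
    rw [hn]; exact_mod_cast Fintype.card_pos
  have key : ∀ t, Real.negMulLog (p t) ≤ 1/n - p t + p t * Real.log n := by
    intro t
    rcases eq_or_lt_of_le (h0 t) with h | h
    · rw [← h]
      simp only [Real.negMulLog_zero, mul_zero, zero_mul, sub_zero, add_zero]
      positivity
    · have hlog : Real.log (1/(p t * n)) ≤ 1/(p t * n) - 1 :=
        Real.log_le_sub_one_of_pos (by positivity)
      have h2 : p t * Real.log (1/(p t * n)) ≤ p t * (1/(p t * n) - 1) :=
        mul_le_mul_of_nonneg_left hlog (le_of_lt h)
      have h3 : p t * (1/(p t * n) - 1) = 1/n - p t := by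
        field_simp
      have h4 : p t * Real.log (1/(p t * n)) =
          Real.negMulLog (p t) - p t * Real.log n := by
        rw [one_div, Real.log_inv, Real.log_mul (ne_of_gt h) (ne_of_gt hnpos),
          Real.negMulLog]
        ring
      rw [h4, h3] at h2
      linarith
  calc ∑ t, Real.negMulLog (p t) ≤ ∑ t, (1/n - p t + p t * Real.log n) :=
        Finset.sum_le_sum fun t _ => key t
    _ = Real.log n := by
        rw [Finset.sum_add_distrib, Finset.sum_sub_distrib, ← Finset.sum_mul, h1]
        simp only [Finset.sum_const, card_univ, nsmul_eq_mul]
        rw [← hn]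
        field_simp
        ring

lemma sum_card_fibers {T : Type} [Fintype T] (X : Ω → T) :
    ∑ t, Nat.card (X ⁻¹' {t}) = Fintype.card Ω := by
  classical
  have h : ∀ t, Nat.card (X ⁻¹' {t}) = (univ.filter (fun ω => X ω = t)).card := by
    intro t
    rw [Nat.card_eq_fintype_card]
    rw [← Fintype.card_subtype]
    apply Fintype.card_congr
    exact Equiv.subtypeEquivRight (by intro x; simp)
  rw [Finset.sum_congr rfl fun t _ => h t]
  rw [← Finset.card_univ (α := Ω)]
  exact (Finset.card_eq_sum_card_fiberwise (fun x _ => Finset.mem_univ (X x))).symm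

lemma H_μu_le_log {T : Type} [Fintype T] [Nonempty T] [Nonempty Ω] (X : Ω → T) :
    H (μu Ω) X ≤ Real.log (Fintype.card T) := by
  apply sum_negMulLog_le
  · intro t; exact ENNReal.toReal_nonneg
  · have h : ∀ t, (μu Ω (X ⁻¹' {t})).toReal
        = (Nat.card (X ⁻¹' {t}) : ℝ) / (Fintype.card Ω : ℝ) := fun t => μu_toReal _
    rw [Finset.sum_congr rfl fun t _ => h t, ← Finset.sum_div]
    rw [div_eq_one_iff_eq (by exact_mod_cast (Fintype.card_ne_zero (α := Ω)))]
    rw [← Nat.cast_sum]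
    exact_mod_cast sum_card_fibers X


lemma determinedBy_of {Ω : Type} [MeasurableSpace Ω] [Nonempty Ω] (μ : Measure Ω)
    {S T : Type} (Y : Ω → T) (X : Ω → S)
    (h : ∀ ω ω', X ω = X ω' → Y ω = Y ω') : DeterminedBy μ Y X := by
  classical
  refine ⟨fun x => if hx : ∃ ω, X ω = x then Y hx.choose else Y (Classical.arbitrary Ω),
    Filter.Eventually.of_forall fun ω => ?_⟩
  have hx : ∃ ω', X ω' = X ω := ⟨ω, rfl⟩
  simp only [dif_pos hx]
  exact (h _ _ hx.choose_spec).symm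

def fiber_fst_equiv {S R : Type} (s : S) :
    ((Prod.fst : S × R → S) ⁻¹' {s}) ≃ R where
  toFun x := x.1.2
  invFun ρ := ⟨(s, ρ), rfl⟩
  left_inv x := Subtype.ext (Prod.ext x.2.symm rfl)
  right_inv ρ := rfl

lemma H_μu_fst {S R : Type} [Fintype S] [Fintype R] [Nonempty R] [Nonempty S]
    [MeasurableSpace (S × R)] [MeasurableSingletonClass (S × R)] :
    H (μu (S × R)) (Prod.fst : S × R → S) = Real.log (Fintype.card S) := by
  have hS : (Fintype.card S : ℝ) ≠ 0 := by exact_mod_cast Fintype.card_ne_zero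
  have hR : (Fintype.card R : ℝ) ≠ 0 := by exact_mod_cast Fintype.card_ne_zero
  have hval : ∀ s : S, (μu (S × R) ((Prod.fst : S × R → S) ⁻¹' {s})).toReal
      = (Fintype.card S : ℝ)⁻¹ := by
    intro s
    rw [μu_toReal, Nat.card_congr (fiber_fst_equiv s), Nat.card_eq_fintype_card,
      Fintype.card_prod, Nat.cast_mul]
    field_simp
  rw [H, Finset.sum_congr rfl fun s _ => congrArg Real.negMulLog (hval s)]
  rw [Real.negMulLog, Real.log_inv]
  simp only [Finset.sum_const, card_univ, nsmul_eq_mul]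
  field_simp

lemma indep_of_fiber_const {S R T : Type} [Fintype S] [Fintype R] [Fintype T]
    [Nonempty S] [Nonempty R]
    [MeasurableSpace (S × R)] [MeasurableSingletonClass (S × R)]
    (X : S × R → T)
    (hconst : ∀ (x : T) (s s' : S),
      Nat.card {ρ : R // X (s, ρ) = x} = Nat.card {ρ : R // X (s', ρ) = x})
    (x : T) (s : S) :
    μu (S × R) (X ⁻¹' {x} ∩ Prod.fst ⁻¹' {s})
      = μu (S × R) (X ⁻¹' {x}) * μu (S × R) (Prod.fst ⁻¹' {s}) := by
  classical
  set n : ℕ := Nat.card {ρ : R // X (s, ρ) = x} with hn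
  have e1 : Nat.card (X ⁻¹' {x} ∩ Prod.fst ⁻¹' {s} : Set (S × R)) = n := by
    rw [hn]
    apply Nat.card_congr
    exact {
      toFun := fun ω => ⟨ω.1.2, by
        have h1 : X ω.1 = x := ω.2.1
        have h2 : ω.1.1 = s := ω.2.2
        rw [show ((s, (ω.1).2) : S × R) = ω.1 from Prod.ext h2.symm rfl]
        exact h1⟩
      invFun := fun ρ => ⟨(s, ρ.1), ⟨ρ.2, rfl⟩⟩
      left_inv := fun ω => Subtype.ext (Prod.ext ω.2.2.symm rfl)
      right_inv := fun ρ => rfl }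
  have e2 : Nat.card ((Prod.fst : S × R → S) ⁻¹' {s}) = Fintype.card R := by
    rw [Nat.card_congr (fiber_fst_equiv s), Nat.card_eq_fintype_card]
  have efib : ∀ s' : S, (univ.filter (fun ω : S × R => X ω = x ∧ ω.1 = s')).card = n := by
    intro s'
    rw [hn, hconst x s s', Nat.card_eq_fintype_card, ← Fintype.card_subtype]
    apply Fintype.card_congr
    exact {
      toFun := fun ω => ⟨ω.1.2, by
        have h2 : ω.1.1 = s' := ω.2.2
        rw [show ((s', (ω.1).2) : S × R) = ω.1 from Prod.ext h2.symm rfl]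
        exact ω.2.1⟩
      invFun := fun ρ => ⟨(s', ρ.1), ⟨ρ.2, rfl⟩⟩
      left_inv := fun ω => Subtype.ext (Prod.ext ω.2.2.symm rfl)
      right_inv := fun ρ => rfl }
  have e3 : Nat.card (X ⁻¹' {x}) = Fintype.card S * n := by
    have h1 : Nat.card (X ⁻¹' {x}) = (univ.filter (fun ω : S × R => X ω = x)).card := by
      rw [Nat.card_eq_fintype_card, ← Fintype.card_subtype]
      apply Fintype.card_congr
      exact Equiv.subtypeEquivRight (by intro ω; simp)
    rw [h1, Finset.card_eq_sum_card_fiberwise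
      (f := fun ω : S × R => ω.1) (t := univ) (fun ω _ => Finset.mem_univ _)]
    have h2 : ∀ s' : S, ((univ.filter (fun ω : S × R => X ω = x)).filter
        (fun ω => ω.1 = s')).card = n := by
      intro s'
      rw [Finset.filter_filter]
      exact efib s'
    rw [Finset.sum_congr rfl fun s' _ => h2 s']
    simp [Finset.card_univ, mul_comm]
  have hcS0 : (Fintype.card S : ℝ≥0∞) ≠ 0 := by
    exact_mod_cast Fintype.card_ne_zero
  have hcStop : (Fintype.card S : ℝ≥0∞) ≠ ⊤ := by simp
  have hcR0 : (Fintype.card R : ℝ≥0∞) ≠ 0 := by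
    exact_mod_cast Fintype.card_ne_zero
  have hcRtop : (Fintype.card R : ℝ≥0∞) ≠ ⊤ := by simp
  rw [μu_apply, μu_apply, μu_apply, e1, e2, e3, Fintype.card_prod]
  push_cast
  rw [ENNReal.mul_div_mul_left _ _ hcS0 hcStop]
  rw [div_eq_mul_inv, div_eq_mul_inv, div_eq_mul_inv]
  rw [show (n : ℝ≥0∞) * ((Fintype.card R : ℝ≥0∞))⁻¹
      * ((Fintype.card R : ℝ≥0∞) * ((Fintype.card S : ℝ≥0∞) * (Fintype.card R : ℝ≥0∞))⁻¹)
      = (n : ℝ≥0∞) * (((Fintype.card R : ℝ≥0∞))⁻¹ * (Fintype.card R : ℝ≥0∞))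
        * ((Fintype.card S : ℝ≥0∞) * (Fintype.card R : ℝ≥0∞))⁻¹ from by ring]
  rw [ENNReal.inv_mul_cancel hcR0 hcRtop, mul_one]




variable {P : Type} [Fintype P] [DecidableEq P] (Γ : AccessStructure P) (r q : ℕ)

abbrev Edg : Type := {E : Finset P // E ∈ Γ.edges}
abbrev Pt : Type := P ⊕ (Edg Γ × Fin r)
abbrev Sct : Type := Fin r → ZMod q
abbrev RT : Type := (P → ZMod q) × (Edg Γ × Pt Γ r × P → ZMod q)
abbrev OmT : Type := Sct r q × RT Γ r q

variable (α : Pt Γ r → ZMod q)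

def Z (s : Sct r q) (π : Pt Γ r) : ZMod q := ∑ i : Fin r, s i * α π ^ (i : ℕ)

lemma Z_add (s s' : Sct r q) (π : Pt Γ r) :
    Z Γ r q α (s + s') π = Z Γ r q α s π + Z Γ r q α s' π := by
  simp [Z, add_mul, Finset.sum_add_distrib]

def SEp (p : P) : Prop := ({p} : Finset P) ∈ Γ.edges

instance : DecidablePred (SEp Γ) := fun p =>
  inferInstanceAs (Decidable (({p} : Finset P) ∈ Γ.edges))

def des (S : Finset P) : P :=
  if h : S.Nonempty then h.choose else (Γ.mem_nonempty _ Γ.nonempty.choose_spec).choose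

lemma des_mem {S : Finset P} (h : S.Nonempty) : des Γ S ∈ S := by
  rw [des, dif_pos h]; exact h.choose_spec

def Hold (E : Edg Γ) (π : Pt Γ r) : Finset P :=
  Sum.elim (fun v => E.1.erase v) (fun _ => E.1) π

def mask (s : Sct r q) (a : P → ZMod q) (p : P) : ZMod q :=
  if SEp Γ p then Z Γ r q α s (Sum.inl p) else a p

def target (ω : OmT Γ r q) (π : Pt Γ r) : ZMod q :=
  Sum.elim (fun v => Z Γ r q α ω.1 (Sum.inl v) - mask Γ r q α ω.1 ω.2.1 v)
    (fun x => Z Γ r q α ω.1 (Sum.inr x)) π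

def piece (ω : OmT Γ r q) (E : Edg Γ) (π : Pt Γ r) (p : P) : ZMod q :=
  if p = des Γ (Hold Γ r E π) then
    target Γ r q α ω π - ∑ w ∈ (Hold Γ r E π).erase p, ω.2.2 (E, π, w)
  else ω.2.2 (E, π, p)

lemma sum_piece (ω : OmT Γ r q) (E : Edg Γ) (π : Pt Γ r) (h : (Hold Γ r E π).Nonempty) :
    ∑ w ∈ Hold Γ r E π, piece Γ r q α ω E π w = target Γ r q α ω π := by
  have hd : des Γ (Hold Γ r E π) ∈ Hold Γ r E π := des_mem Γ h
  rw [← Finset.add_sum_erase _ _ hd]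
  rw [Finset.sum_congr rfl (fun w hw => ?_), piece, if_pos rfl]
  · ring
  · rw [piece, if_neg (Finset.ne_of_mem_erase hw)]

def ptIdx (E : Edg Γ) (p : P) (j : Fin (r-1)) : Pt Γ r :=
  if h : (j : ℕ) < (E.1.erase p).card then
    Sum.inl (((E.1.erase p).equivFin.symm ⟨j, h⟩ : (E.1.erase p : Finset P)) : P)
  else Sum.inr (E, ⟨(j : ℕ)+1, by have := j.isLt; omega⟩)

def shf (p : P) (ω : OmT Γ r q) :
    ZMod q × ({E : Edg Γ // p ∈ E.1} → Fin (r-1) → ZMod q) :=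
  (mask Γ r q α ω.1 ω.2.1 p,
   fun E j => piece Γ r q α ω E.1 (ptIdx Γ r E.1 p j) p)

def ptOf (E : Edg Γ) (i : Fin r) : Pt Γ r :=
  if h : (i : ℕ) < E.1.card then Sum.inl ((E.1.equivFin.symm ⟨i, h⟩ : (E.1 : Finset P)) : P)
  else Sum.inr (E, i)

lemma ptOf_inj (E : Edg Γ) : Function.Injective (ptOf Γ r E) := by
  intro i i' h
  rw [ptOf, ptOf] at h
  split_ifs at h with h1 h2 h2
  · have h3 : (E.1.equivFin.symm ⟨i, h1⟩) = (E.1.equivFin.symm ⟨i', h2⟩) :=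
      Subtype.ext (Sum.inl.inj h)
    have h4 := E.1.equivFin.symm.injective h3
    have h5 : (i : ℕ) = (i' : ℕ) := congrArg (fun x : Fin E.1.card => (x : ℕ)) h4
    exact Fin.ext h5
  all_goals simp_all [Prod.ext_iff]

lemma ptIdx_inl (E : Edg Γ) {w v : P} (hv : v ∈ E.1.erase w) (hw : w ∈ E.1)
    (hcard : E.1.card ≤ r) :
    ∃ j : Fin (r-1), ptIdx Γ r E w j = Sum.inl v := by
  have hce : (E.1.erase w).card = E.1.card - 1 := Finset.card_erase_of_mem hw
  have hcard' : (E.1.erase w).card ≤ r - 1 := by omega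
  have hlt : (((E.1.erase w).equivFin ⟨v, hv⟩ : Fin _) : ℕ) < (E.1.erase w).card :=
    ((E.1.erase w).equivFin ⟨v, hv⟩).isLt
  refine ⟨⟨_, lt_of_lt_of_le hlt hcard'⟩, ?_⟩
  rw [ptIdx, dif_pos hlt]
  congr 1
  have : (⟨_, hlt⟩ : Fin (E.1.erase w).card) = (E.1.erase w).equivFin ⟨v, hv⟩ :=
    Fin.ext rfl
  rw [this, Equiv.symm_apply_apply]

lemma ptIdx_inr (E : Edg Γ) {w : P} (hw : w ∈ E.1) (i : Fin r) (hi : E.1.card ≤ (i : ℕ)) :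
    ∃ j : Fin (r-1), ptIdx Γ r E w j = Sum.inr (E, i) := by
  have h1 : 0 < E.1.card := Finset.card_pos.2 ⟨w, hw⟩
  have hce : (E.1.erase w).card = E.1.card - 1 := Finset.card_erase_of_mem hw
  have hilt := i.isLt
  refine ⟨⟨(i : ℕ) - 1, by omega⟩, ?_⟩
  rw [ptIdx, dif_neg (show ¬(((i:ℕ)-1) < (E.1.erase w).card) by omega)]
  simp only [Sum.inr.injEq, Prod.mk.injEq, true_and]
  exact Fin.ext (show ((i:ℕ)-1)+1 = (i:ℕ) by omega)

lemma Z_inl_eq (ω : OmT Γ r q) (E : Edg Γ) {v : P} (hv : v ∈ E.1) :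
    Z Γ r q α ω.1 (Sum.inl v) = mask Γ r q α ω.1 ω.2.1 v
      + ∑ w ∈ E.1.erase v, piece Γ r q α ω E (Sum.inl v) w := by
  by_cases hne : (E.1.erase v).Nonempty
  · have hs := sum_piece Γ r q α ω E (Sum.inl v) hne
    have hH : Hold Γ r E (Sum.inl v) = E.1.erase v := rfl
    rw [hH] at hs
    rw [hs]
    have ht : target Γ r q α ω (Sum.inl v)
        = Z Γ r q α ω.1 (Sum.inl v) - mask Γ r q α ω.1 ω.2.1 v := rfl
    rw [ht]; ring
  · rw [not_nonempty_iff_eq_empty] at hne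
    have hE : E.1 = {v} := by
      rcases (Finset.erase_eq_empty_iff _ _).mp hne with h | h
      · exact absurd (h ▸ hv) (Finset.notMem_empty v)
      · exact h
    have hSE : SEp Γ v := by rw [SEp, ← hE]; exact E.2
    rw [hne]
    simp [mask, if_pos hSE]

lemma Z_inr_eq (ω : OmT Γ r q) (E : Edg Γ) (i : Fin r) :
    Z Γ r q α ω.1 (Sum.inr (E, i)) = ∑ w ∈ E.1, piece Γ r q α ω E (Sum.inr (E, i)) w := by
  have hs := sum_piece Γ r q α ω E (Sum.inr (E, i))
    (by simpa [Hold] using Γ.mem_nonempty E.1 E.2)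
  have hH : Hold Γ r E (Sum.inr (E, i)) = E.1 := rfl
  rw [hH] at hs
  rw [hs]
  rfl

lemma vand_cancel [Fact q.Prime] {v : Fin r → ZMod q} (hv : Function.Injective v)
    {s s' : Fin r → ZMod q}
    (h : ∀ i, ∑ j : Fin r, s j * v i ^ (j : ℕ) = ∑ j : Fin r, s' j * v i ^ (j : ℕ)) :
    s = s' := by
  have hdet : IsUnit (Matrix.vandermonde v).det := by
    rw [Matrix.det_vandermonde]
    rw [isUnit_iff_ne_zero]
    apply Finset.prod_ne_zero_iff.2
    intro i _
    apply Finset.prod_ne_zero_iff.2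
    intro j hj
    exact sub_ne_zero.2 fun hh => (Finset.mem_Ioi.1 hj).ne' (hv hh)
  have hM : (Matrix.vandermonde v).mulVec s = (Matrix.vandermonde v).mulVec s' := by
    funext i
    have e : ∀ t : Fin r → ZMod q, (Matrix.vandermonde v).mulVec t i
        = ∑ j : Fin r, t j * v i ^ (j : ℕ) := by
      intro t
      simp only [Matrix.mulVec, Matrix.vandermonde, dotProduct, Matrix.of_apply]
      exact Finset.sum_congr rfl fun j _ => mul_comm _ _
    rw [e, e]; exact h i
  have h2 := congrArg (fun w => (Matrix.vandermonde v)⁻¹.mulVec w) hM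
  simpa [Matrix.mulVec_mulVec, Matrix.nonsing_inv_mul _ hdet, Matrix.one_mulVec] using h2

lemma qualified_det [Fact q.Prime] (hα : Function.Injective α)
    (hsize : ∀ E ∈ Γ.edges, E.card ≤ r)
    {A : Finset P} (hA : Γ.Qualified A) {ω ω' : OmT Γ r q}
    (hsh : ∀ p ∈ A, shf Γ r q α p ω = shf Γ r q α p ω') : ω.1 = ω'.1 := by
  obtain ⟨E0, hE0, hEA⟩ := hA
  set E : Edg Γ := ⟨E0, hE0⟩ with hE
  have hEA' : E.1 ⊆ A := hEA
  have hmask : ∀ p ∈ A, mask Γ r q α ω.1 ω.2.1 p = mask Γ r q α ω'.1 ω'.2.1 p :=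
    fun p hp => congrArg Prod.fst (hsh p hp)
  have hvec : ∀ p (hp : p ∈ A) (F : Edg Γ) (hpF : p ∈ F.1) (j : Fin (r-1)),
      piece Γ r q α ω F (ptIdx Γ r F p j) p = piece Γ r q α ω' F (ptIdx Γ r F p j) p := by
    intro p hp F hpF j
    have h2 := congrArg Prod.snd (hsh p hp)
    exact congrFun (congrFun h2 ⟨F, hpF⟩) j
  have hpiece : ∀ (w : P), w ∈ E.1 → ∀ π, (∃ j : Fin (r-1), ptIdx Γ r E w j = π) →
      piece Γ r q α ω E π w = piece Γ r q α ω' E π w := by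
    rintro w hw π ⟨j, rfl⟩
    exact hvec w (hEA' hw) E hw j
  have hZ : ∀ i : Fin r, Z Γ r q α ω.1 (ptOf Γ r E i) = Z Γ r q α ω'.1 (ptOf Γ r E i) := by
    intro i
    rw [ptOf]
    split_ifs with h1
    · set v : P := ((E.1.equivFin.symm ⟨i, h1⟩ : (E.1 : Finset P)) : P) with hv
      have hvE : v ∈ E.1 := Subtype.mem _
      rw [Z_inl_eq Γ r q α ω E hvE, Z_inl_eq Γ r q α ω' E hvE]
      rw [hmask v (hEA' hvE)]
      congr 1
      apply Finset.sum_congr rfl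
      intro w hwv
      have hwE : w ∈ E.1 := Finset.mem_of_mem_erase hwv
      apply hpiece w hwE
      apply ptIdx_inl Γ r E _ hwE (hsize E.1 E.2)
      exact Finset.mem_erase.2 ⟨Ne.symm (Finset.mem_erase.1 hwv).1, hvE⟩
    · push_neg at h1
      rw [Z_inr_eq, Z_inr_eq]
      apply Finset.sum_congr rfl
      intro w hw
      exact hpiece w hw _ (ptIdx_inr Γ r E hw i h1)
  apply vand_cancel r q (hα.comp (ptOf_inj Γ r E))
  intro i
  exact hZ i

lemma unqualified_shift {A : Finset P} (hA : ¬ Γ.Qualified A) (Δ : Sct r q) :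
    ∃ t : RT Γ r q, ∀ (s : Sct r q) (ρ : RT Γ r q), ∀ p ∈ A,
      shf Γ r q α p (s + Δ, ρ + t) = shf Γ r q α p (s, ρ) := by
  classical
  have hW : ∀ E : Edg Γ, ∃ w, w ∈ E.1 ∧ w ∉ A := by
    intro E
    have h1 : ¬ E.1 ⊆ A := fun hsub => hA ⟨E.1, E.2, hsub⟩
    obtain ⟨w, hw1, hw2⟩ := Finset.not_subset.1 h1
    exact ⟨w, hw1, hw2⟩
  choose wsel hwmem hwnot using hW
  have hnoSE : ∀ v ∈ A, ¬ SEp Γ v := fun v hv hSE =>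
    hA ⟨{v}, hSE, Finset.singleton_subset_iff.2 hv⟩
  set ΔT : Pt Γ r → ZMod q := fun π =>
    Sum.elim (fun v => if ¬ SEp Γ v ∧ v ∈ A then Z Γ r q α Δ (Sum.inl v) else 0)
      (fun x => Z Γ r q α Δ (Sum.inr x)) π with hΔT
  set t1 : P → ZMod q := fun v => if SEp Γ v ∨ v ∈ A then 0 else Z Γ r q α Δ (Sum.inl v)
    with ht1
  set t2 : Edg Γ × Pt Γ r × P → ZMod q := fun epw =>
    if epw.2.2 = wsel epw.1 ∧ epw.2.2 ≠ des Γ (Hold Γ r epw.1 epw.2.1) then ΔT epw.2.1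
    else 0 with ht2
  refine ⟨(t1, t2), ?_⟩
  intro s ρ p hp
  have hwselHold : ∀ (E : Edg Γ) (π : Pt Γ r), ΔT π ≠ 0 → wsel E ∈ Hold Γ r E π := by
    intro E π hne
    cases π with
    | inl v =>
      have hvA : v ∈ A := by
        by_contra hvA
        exact hne (by simp [hΔT, hvA])
      have : wsel E ≠ v := fun hh => hwnot E (hh ▸ hvA)
      exact Finset.mem_erase.2 ⟨this, hwmem E⟩
    | inr x => exact hwmem E
  have htarget : ∀ π, target Γ r q α (s + Δ, (ρ.1 + t1, ρ.2 + t2)) π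
      = target Γ r q α (s, ρ) π + ΔT π := by
    intro π
    cases π with
    | inl v =>
      show Z Γ r q α (s + Δ) (Sum.inl v) - mask Γ r q α (s + Δ) (ρ.1 + t1) v
        = Z Γ r q α s (Sum.inl v) - mask Γ r q α s ρ.1 v + _
      rw [Z_add]
      by_cases hSE : SEp Γ v
      · rw [mask, if_pos hSE, mask, if_pos hSE, Z_add]
        simp [hΔT, hSE]
      · rw [mask, if_neg hSE, mask, if_neg hSE]
        by_cases hvA : v ∈ A
        · have : t1 v = 0 := by simp [ht1, hvA]
          simp only [Pi.add_apply, this, add_zero]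
          simp [hΔT, hSE, hvA]
          ring
        · have : t1 v = Z Γ r q α Δ (Sum.inl v) := by simp [ht1, hvA, hSE]
          simp only [Pi.add_apply, this]
          simp [hΔT, hvA]
    | inr x =>
      show Z Γ r q α (s + Δ) (Sum.inr x) = Z Γ r q α s (Sum.inr x) + _
      rw [Z_add]
      simp [hΔT]
  -- now the share equality
  rw [shf, shf]
  have hmask : mask Γ r q α (s + Δ) (ρ.1 + t1) p = mask Γ r q α s ρ.1 p := by
    rw [mask, if_neg (hnoSE p hp), mask, if_neg (hnoSE p hp)]
    simp [ht1, hp]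
  refine Prod.ext hmask ?_
  funext E j
  set π := ptIdx Γ r E.1 p j with hπ
  show piece Γ r q α (s + Δ, (ρ.1 + t1, ρ.2 + t2)) E.1 π p = piece Γ r q α (s, ρ) E.1 π p
  rw [piece, piece]
  by_cases hdes : p = des Γ (Hold Γ r E.1 π)
  · rw [if_pos hdes, if_pos hdes]
    have hsum : ∑ w ∈ (Hold Γ r E.1 π).erase p, (ρ.2 + t2) (E.1, π, w)
        = (∑ w ∈ (Hold Γ r E.1 π).erase p, ρ.2 (E.1, π, w)) + ΔT π
          ∨ (∑ w ∈ (Hold Γ r E.1 π).erase p, (ρ.2 + t2) (E.1, π, w)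
            = (∑ w ∈ (Hold Γ r E.1 π).erase p, ρ.2 (E.1, π, w)) ∧ ΔT π = 0) := by
      have hsplit : ∑ w ∈ (Hold Γ r E.1 π).erase p, (ρ.2 + t2) (E.1, π, w)
          = (∑ w ∈ (Hold Γ r E.1 π).erase p, ρ.2 (E.1, π, w))
            + ∑ w ∈ (Hold Γ r E.1 π).erase p, t2 (E.1, π, w) := by
        rw [← Finset.sum_add_distrib]
        rfl
      have hgt2 : ∀ w, t2 (E.1, π, w)
          = if w = wsel E.1 then (if wsel E.1 = des Γ (Hold Γ r E.1 π) then 0 else ΔT π)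
            else 0 := by
        intro w
        by_cases hw : w = wsel E.1
        · rw [hw]
          by_cases hd : wsel E.1 = des Γ (Hold Γ r E.1 π) <;> simp [ht2, hd]
        · simp [ht2, hw]
      have hsum2 : ∑ w ∈ (Hold Γ r E.1 π).erase p, t2 (E.1, π, w)
          = if wsel E.1 ∈ (Hold Γ r E.1 π).erase p then
              (if wsel E.1 = des Γ (Hold Γ r E.1 π) then 0 else ΔT π) else 0 := by
        rw [Finset.sum_congr rfl fun w _ => hgt2 w]
        exact Finset.sum_ite_eq' _ _ _
      by_cases hΔ : ΔT π = 0
      · right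
        constructor
        · rw [hsplit, hsum2]
          simp [hΔ]
        · exact hΔ
      · left
        rw [hsplit, hsum2]
        have h1 : wsel E.1 ∈ (Hold Γ r E.1 π).erase p :=
          Finset.mem_erase.2 ⟨fun hh => hwnot E.1 (by rw [hh]; exact hp),
            hwselHold E.1 π hΔ⟩
        have h2 : wsel E.1 ≠ des Γ (Hold Γ r E.1 π) := fun hh =>
          hwnot E.1 (by rw [hh, ← hdes]; exact hp)
        rw [if_pos h1, if_neg h2]
    rcases hsum with h | ⟨h, hz⟩
    · rw [h, htarget π]
      ring
    · rw [h, htarget π, hz]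
      ring
  · rw [if_neg hdes, if_neg hdes]
    have : t2 (E.1, π, p) = 0 := by
      have : ¬ (p = wsel E.1 ∧ p ≠ des Γ (Hold Γ r E.1 π)) := by
        rintro ⟨h1, -⟩
        exact hwnot E.1 (h1 ▸ hp)
      simp [ht2, this]
    show ρ.2 (E.1, π, p) + t2 (E.1, π, p) = ρ.2 (E.1, π, p)
    rw [this, add_zero]

lemma count_JA {A : Finset P} (hA : ¬ Γ.Qualified A) (s s' : Sct r q)
    (x : (p : A) → ZMod q × ({E : Edg Γ // (p : P) ∈ E.1} → Fin (r-1) → ZMod q)) :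
    Nat.card {ρ : RT Γ r q // (fun p : A => shf Γ r q α (p : P) (s, ρ)) = x}
      = Nat.card {ρ : RT Γ r q // (fun p : A => shf Γ r q α (p : P) (s', ρ)) = x} := by
  obtain ⟨t, ht⟩ := unqualified_shift Γ r q α hA (s' - s)
  have key : ∀ ρ : RT Γ r q, (fun p : A => shf Γ r q α (p : P) (s', ρ + t))
      = (fun p : A => shf Γ r q α (p : P) (s, ρ)) := by
    intro ρ
    funext p
    have h1 := ht s ρ (p : P) p.2
    rwa [add_sub_cancel] at h1
  apply Nat.card_congr
  refine Equiv.subtypeEquiv (Equiv.addRight t) ?_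
  intro ρ
  rw [Equiv.coe_addRight, key ρ]

lemma card_edgesAt (p : P) :
    Fintype.card {E : Edg Γ // p ∈ E.1} = Γ.degree p := by
  classical
  rw [AccessStructure.degree, ← Fintype.card_coe (Γ.edges.filter (fun E => p ∈ E))]
  apply Fintype.card_congr
  refine (Equiv.subtypeSubtypeEquivSubtypeInter (· ∈ Γ.edges) (p ∈ ·)).trans
    (Equiv.subtypeEquivRight ?_)
  intro E
  simp [Finset.mem_filter]

lemma card_shf [NeZero q] (p : P) :
    Fintype.card (ZMod q × ({E : Edg Γ // p ∈ E.1} → Fin (r-1) → ZMod q))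
      = q ^ (1 + Γ.degree p * (r - 1)) := by
  classical
  rw [Fintype.card_prod, Fintype.card_fun, Fintype.card_fun, ZMod.card, Fintype.card_fin,
    card_edgesAt]
  rw [pow_add, pow_one, ← pow_mul, mul_comm (r-1)]

lemma card_sct [NeZero q] : Fintype.card (Sct r q) = q ^ r := by
  show Fintype.card (Fin r → ZMod q) = q ^ r
  rw [Fintype.card_fun, ZMod.card, Fintype.card_fin]


end St4

/-- If every minimal qualified set of `Γ` has size at most `r`
(`r ≥ 2`) and `d` is the maximal degree, then some perfect secret sharing scheme
realizes `Γ` with complexity at most `d - (d-1)/r`; consequently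
`σ(Γ) ≤ d - (d-1)/r`. -/
theorem statement4 {P : Type} [Fintype P] [DecidableEq P] (Γ : AccessStructure P)
    (r : ℕ) (hr : 2 ≤ r) (hsize : ∀ E ∈ Γ.edges, E.card ≤ r) :
    (∃ 𝒮 : Scheme P, 𝒮.Realizes Γ ∧
        𝒮.complexity ≤ ENNReal.ofReal
          ((Γ.maxDegree : ℝ) - ((Γ.maxDegree : ℝ) - 1) / (r : ℝ))) ∧
      sigmaC Γ ≤ ENNReal.ofReal
        ((Γ.maxDegree : ℝ) - ((Γ.maxDegree : ℝ) - 1) / (r : ℝ)) := by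
  classical
  have key : ∃ 𝒮 : Scheme P, 𝒮.Realizes Γ ∧ 𝒮.complexity ≤ ENNReal.ofReal
      ((Γ.maxDegree : ℝ) - ((Γ.maxDegree : ℝ) - 1) / (r : ℝ)) := by
    obtain ⟨q, hqle, hq⟩ := Nat.exists_infinite_primes (Fintype.card (St4.Pt Γ r) + 1)
    haveI := Fact.mk hq
    haveI : NeZero q := ⟨hq.pos.ne'⟩
    have hqcard : Fintype.card (St4.Pt Γ r) ≤ Fintype.card (ZMod q) := by
      rw [ZMod.card]; omega
    obtain ⟨α⟩ := Function.Embedding.nonempty_of_card_le hqcard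
    letI msΩ : MeasurableSpace (St4.OmT Γ r q) := ⊤
    haveI : MeasurableSingletonClass (St4.OmT Γ r q) :=
      ⟨fun _ => MeasurableSpace.measurableSet_top⟩
    have hq2 : 2 ≤ q := hq.two_le
    have hq1 : (1 : ℝ) < q := by exact_mod_cast hq2
    have hlogq : 0 < Real.log q := Real.log_pos hq1
    have hHsec : H (St4.μu (St4.OmT Γ r q)) (Prod.fst : St4.OmT Γ r q → St4.Sct r q)
        = (r : ℝ) * Real.log q := by
      rw [St4.H_μu_fst, St4.card_sct]
      push_cast
      rw [Real.log_pow]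
    refine ⟨{ Ω := St4.OmT Γ r q, ms := msΩ, μ := St4.μu (St4.OmT Γ r q),
              isProb := St4.μu_prob, Sec := St4.Sct r q, sec := Prod.fst,
              Sh := fun p => ZMod q × ({E : St4.Edg Γ // p ∈ E.1} → Fin (r-1) → ZMod q),
              sh := fun p => St4.shf Γ r q (⇑α) p }, ⟨?_, ?_, ?_⟩, ?_⟩
    · show 0 < H (St4.μu (St4.OmT Γ r q)) (Prod.fst : St4.OmT Γ r q → St4.Sct r q)
      rw [hHsec]
      have hr0 : (0:ℝ) < r := by
        exact_mod_cast Nat.lt_of_lt_of_le Nat.zero_lt_two hr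
      exact mul_pos hr0 hlogq
    · intro A hA
      apply St4.determinedBy_of
      intro ω ω' hxx
      exact St4.qualified_det Γ r q (⇑α) α.injective hsize hA
        (fun p hp => congrFun hxx ⟨p, hp⟩)
    · intro A hA
      intro x t
      exact St4.indep_of_fiber_const
        (joint (fun p => St4.shf Γ r q (⇑α) p) A)
        (fun x' s s' => St4.count_JA Γ r q (⇑α) hA s s' x') x t
    · show (⨆ p : P, ENNReal.ofReal
          (H (St4.μu (St4.OmT Γ r q)) (St4.shf Γ r q (⇑α) p)))
          / ENNReal.ofReal
            (H (St4.μu (St4.OmT Γ r q)) (Prod.fst : St4.OmT Γ r q → St4.Sct r q)) ≤ _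
      have hdeg : ∀ p : P, Γ.degree p ≤ Γ.maxDegree := fun p =>
        Finset.le_sup (Finset.mem_univ p)
      have hsup : ∀ p : P, H (St4.μu (St4.OmT Γ r q)) (St4.shf Γ r q (⇑α) p)
          ≤ ((1 + Γ.maxDegree * (r-1) : ℕ) : ℝ) * Real.log q := by
        intro p
        calc H (St4.μu (St4.OmT Γ r q)) (St4.shf Γ r q (⇑α) p)
            ≤ Real.log (Fintype.card
              (ZMod q × ({E : St4.Edg Γ // p ∈ E.1} → Fin (r-1) → ZMod q))) :=
              St4.H_μu_le_log _
          _ = ((1 + Γ.degree p * (r-1) : ℕ) : ℝ) * Real.log q := by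
              rw [St4.card_shf]
              push_cast
              rw [Real.log_pow]
              push_cast
              ring
          _ ≤ ((1 + Γ.maxDegree * (r-1) : ℕ) : ℝ) * Real.log q := by
              apply mul_le_mul_of_nonneg_right _ (le_of_lt hlogq)
              exact_mod_cast Nat.add_le_add_left (Nat.mul_le_mul_right _ (hdeg p)) 1
      calc (⨆ p : P, ENNReal.ofReal
            (H (St4.μu (St4.OmT Γ r q)) (St4.shf Γ r q (⇑α) p)))
            / ENNReal.ofReal
              (H (St4.μu (St4.OmT Γ r q)) (Prod.fst : St4.OmT Γ r q → St4.Sct r q))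
          ≤ ENNReal.ofReal (((1 + Γ.maxDegree * (r-1) : ℕ) : ℝ) * Real.log q)
            / ENNReal.ofReal ((r : ℝ) * Real.log q) := by
            rw [hHsec]
            exact ENNReal.div_le_div_right
              (iSup_le fun p => ENNReal.ofReal_le_ofReal (hsup p)) _
        _ = ENNReal.ofReal ((Γ.maxDegree : ℝ) - ((Γ.maxDegree : ℝ) - 1) / (r : ℝ)) := by
            rw [← ENNReal.ofReal_div_of_pos (by positivity)]
            congr 1
            have hr0 : (r : ℝ) ≠ 0 := by
              have : (0:ℝ) < r := by exact_mod_cast Nat.lt_of_lt_of_le Nat.zero_lt_two hr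
              exact ne_of_gt this
            have hcast : ((1 + Γ.maxDegree * (r-1) : ℕ) : ℝ)
                = 1 + (Γ.maxDegree : ℝ) * ((r : ℝ) - 1) := by
              push_cast [Nat.cast_sub (show 1 ≤ r by omega)]
              ring
            rw [hcast]
            field_simp
            ring
  obtain ⟨𝒮, h1, h2⟩ := key
  exact ⟨⟨𝒮, h1, h2⟩, le_trans (iInf₂_le 𝒮 h1) h2⟩

end

end OnlineSecretSharing
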